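/- Let M be a flat left R-module. Then every A ∈ 𝒜 is a flat left R-module if and only if every submodule of every M-𝒜-flat right R-module is M-𝒜-flat. -/

import Mathlib

open TensorProduct MulOpposite CategoryTheory

universe u

section NC

variable (R : Type u) [Ring R]

/-- The defining relations of the tensor product `N ⊗[R] X` of a right `R`-module `N`
and a left `R`-module `X` over a (possibly noncommutative) ring `R`, inside `N ⊗[ℤ] X`. -/
def ncRel (N : Type u) [AddCommGroup N] [Module Rᵐᵒᵖ N]
    (X : Type u) [AddCommGroup X] [Module R X] : Submodule ℤ (N ⊗[ℤ] X) :=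
  Submodule.span ℤ {z | ∃ (r : R) (n : N) (x : X), z = (op r • n) ⊗ₜ[ℤ] x - n ⊗ₜ[ℤ] (r • x)}

/-- The tensor product `N ⊗[R] X` of a right `R`-module `N` and a left `R`-module `X`
over a (possibly noncommutative) ring `R`. -/
abbrev NCTensor (N : Type u) [AddCommGroup N] [Module Rᵐᵒᵖ N]
    (X : Type u) [AddCommGroup X] [Module R X] : Type u :=
  (N ⊗[ℤ] X) ⧸ ncRel R N X

/-- Functoriality of the tensor product in the left (right-module) variable. -/
noncomputable def ncMapL {N N' : Type u} [AddCommGroup N] [Module Rᵐᵒᵖ N]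
    [AddCommGroup N'] [Module Rᵐᵒᵖ N'] (g : N →ₗ[Rᵐᵒᵖ] N')
    (X : Type u) [AddCommGroup X] [Module R X] :
    NCTensor R N X →ₗ[ℤ] NCTensor R N' X :=
  Submodule.mapQ _ _ (LinearMap.rTensor X g.toAddMonoidHom.toIntLinearMap) (by
    rw [ncRel, Submodule.span_le]
    rintro _ ⟨r, n, x, rfl⟩
    change LinearMap.rTensor X g.toAddMonoidHom.toIntLinearMap
      ((op r • n) ⊗ₜ[ℤ] x - n ⊗ₜ[ℤ] (r • x)) ∈ ncRel R N' X
    refine Submodule.subset_span ⟨r, g n, x, ?_⟩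
    rw [map_sub, LinearMap.rTensor_tmul, LinearMap.rTensor_tmul]
    have h : g.toAddMonoidHom.toIntLinearMap (op r • n) =
        op r • g.toAddMonoidHom.toIntLinearMap n := by
      simp [map_smul]
    rw [h]
    rfl)

/-- Functoriality of the tensor product in the right (left-module) variable. -/
noncomputable def ncMap (N : Type u) [AddCommGroup N] [Module Rᵐᵒᵖ N]
    {X Y : Type u} [AddCommGroup X] [Module R X] [AddCommGroup Y] [Module R Y]
    (f : X →ₗ[R] Y) : NCTensor R N X →ₗ[ℤ] NCTensor R N Y :=
  Submodule.mapQ _ _ (LinearMap.lTensor N f.toAddMonoidHom.toIntLinearMap) (by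
    rw [ncRel, Submodule.span_le]
    rintro _ ⟨r, n, x, rfl⟩
    change LinearMap.lTensor N f.toAddMonoidHom.toIntLinearMap
      ((op r • n) ⊗ₜ[ℤ] x - n ⊗ₜ[ℤ] (r • x)) ∈ ncRel R N Y
    refine Submodule.subset_span ⟨r, n, f x, ?_⟩
    rw [map_sub, LinearMap.lTensor_tmul, LinearMap.lTensor_tmul]
    have h : f.toAddMonoidHom.toIntLinearMap (r • x) =
        r • f.toAddMonoidHom.toIntLinearMap x := by
      simp [map_smul]
    rw [h]
    rfl)

lemma ncMap_mk (N : Type u) [AddCommGroup N] [Module Rᵐᵒᵖ N]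
    {X Y : Type u} [AddCommGroup X] [Module R X] [AddCommGroup Y] [Module R Y]
    (f : X →ₗ[R] Y) (w : N ⊗[ℤ] X) :
    ncMap R N f (Submodule.Quotient.mk w) =
      Submodule.Quotient.mk (LinearMap.lTensor N f.toAddMonoidHom.toIntLinearMap w) := by
  unfold ncMap
  exact Submodule.mapQ_apply (p := ncRel R N X) (q := ncRel R N Y) (LinearMap.lTensor N f.toAddMonoidHom.toIntLinearMap) w

section lemmas

variable {R}
variable {X Y Z : Type u} [AddCommGroup X] [Module R X] [AddCommGroup Y] [Module R Y]
  [AddCommGroup Z] [Module R Z]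

lemma toInt_id : ((LinearMap.id : X →ₗ[R] X).toAddMonoidHom).toIntLinearMap =
    (LinearMap.id : X →ₗ[ℤ] X) := rfl

lemma toInt_comp (f : X →ₗ[R] Y) (g : Y →ₗ[R] Z) :
    ((g ∘ₗ f).toAddMonoidHom).toIntLinearMap =
      g.toAddMonoidHom.toIntLinearMap ∘ₗ f.toAddMonoidHom.toIntLinearMap := rfl

lemma toInt_add (f g : X →ₗ[R] Y) :
    ((f + g).toAddMonoidHom).toIntLinearMap =
      f.toAddMonoidHom.toIntLinearMap + g.toAddMonoidHom.toIntLinearMap := rfl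

end lemmas

/-- The functor `N ⊗[R] - : R-Mod ⥤ Ab` for a right `R`-module `N`. -/
noncomputable def ncTensorFunctor (N : Type u) [AddCommGroup N] [Module Rᵐᵒᵖ N] :
    ModuleCat.{u} R ⥤ ModuleCat.{u} ℤ where
  obj X := ModuleCat.of ℤ (NCTensor R N X)
  map {X Y} f := ModuleCat.ofHom (ncMap R N f.hom)
  map_id X := by
    refine ModuleCat.hom_ext (LinearMap.ext fun z => ?_)
    obtain ⟨w, rfl⟩ := Submodule.Quotient.mk_surjective _ z
    show ncMap R N (LinearMap.id : X →ₗ[R] X) _ = _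
    rw [ncMap_mk, toInt_id, LinearMap.lTensor_id]
    rfl
  map_comp {X Y Z} f g := by
    refine ModuleCat.hom_ext (LinearMap.ext fun z => ?_)
    obtain ⟨w, rfl⟩ := Submodule.Quotient.mk_surjective _ z
    show ncMap R N (g.hom ∘ₗ f.hom) (Submodule.Quotient.mk w) = ncMap R N g.hom (ncMap R N f.hom (Submodule.Quotient.mk w))
    rw [ncMap_mk, ncMap_mk, ncMap_mk, toInt_comp, LinearMap.lTensor_comp]
    rfl

instance ncTensorFunctor_additive (N : Type u) [AddCommGroup N] [Module Rᵐᵒᵖ N] :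
    (ncTensorFunctor R N).Additive where
  map_add {X Y f g} := by
    refine ModuleCat.hom_ext (LinearMap.ext fun z => ?_)
    obtain ⟨w, rfl⟩ := Submodule.Quotient.mk_surjective _ z
    show ncMap R N (f.hom + g.hom) (Submodule.Quotient.mk w) = ncMap R N f.hom (Submodule.Quotient.mk w) + ncMap R N g.hom (Submodule.Quotient.mk w)
    rw [ncMap_mk, ncMap_mk, ncMap_mk, toInt_add, LinearMap.lTensor_add]
    rfl

/-- `Tor₁^R(N, Z)` for a right `R`-module `N` and a left `R`-module `Z`, defined as the value at
`Z` of the first left derived functor of the functor `N ⊗[R] -`. -/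
noncomputable def ncTor1 (N : Type u) [AddCommGroup N] [Module Rᵐᵒᵖ N]
    (Z : Type u) [AddCommGroup Z] [Module R Z] : ModuleCat.{u} ℤ :=
  (((ncTensorFunctor R N).leftDerived 1).obj (ModuleCat.of R Z))

/-- `Tor₁^R(N, Z) = 0`. -/
def Tor1IsZero (N : Type u) [AddCommGroup N] [Module Rᵐᵒᵖ N]
    (Z : Type u) [AddCommGroup Z] [Module R Z] : Prop :=
  Limits.IsZero (ncTor1 R N Z)

/-- `Ext¹_R(Z, T) = 0`, where `Ext` is the derived functor of `Hom` on the category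
of left `R`-modules. -/
def Ext1IsZero (Z T : Type u) [AddCommGroup Z] [Module R Z] [AddCommGroup T] [Module R T] :
    Prop :=
  Limits.IsZero ((((Ext ℤ (ModuleCat.{u} R) 1).obj (Opposite.op (ModuleCat.of R Z))).obj
    (ModuleCat.of R T)))

end NC

open MulOpposite


section Char

variable (R : Type u) [Ring R]

/-- The right `R`-module structure on the character module `A⁺ = Hom_ℤ(A, ℚ/ℤ)` of a left
`R`-module `A`, given by `(c • r) (a) = c (r • a)`. -/
instance charModuleRight (A : Type u) [AddCommGroup A] [Module R A] :
    Module Rᵐᵒᵖ (CharacterModule A) where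
  smul r c := (c.comp (DistribMulAction.toAddMonoidHom A r.unop) : A →+ _)
  one_smul c := DFunLike.ext _ _ fun a => congrArg c (one_smul R a)
  mul_smul r s c := DFunLike.ext _ _ fun a => congrArg c (mul_smul s.unop r.unop a)
  smul_zero r := rfl
  smul_add r c c' := rfl
  add_smul r s c := DFunLike.ext _ _ fun a => by
    show c ((r.unop + s.unop) • a) = c (r.unop • a) + c (s.unop • a)
    rw [add_smul, map_add]
  zero_smul c := DFunLike.ext _ _ fun a => by
    show c ((0 : R) • a) = 0
    rw [zero_smul, map_zero]

/-- The left `R`-module structure on the character module `N⁺ = Hom_ℤ(N, ℚ/ℤ)` of a right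
`R`-module `N`, given by `(r • c) (n) = c (n • r)`. -/
instance charModuleLeft (N : Type u) [AddCommGroup N] [Module Rᵐᵒᵖ N] :
    Module R (CharacterModule N) where
  smul r c := (c.comp (DistribMulAction.toAddMonoidHom N (op r)) : N →+ _)
  one_smul c := DFunLike.ext _ _ fun n => congrArg c (one_smul Rᵐᵒᵖ n)
  mul_smul r s c := DFunLike.ext _ _ fun n => congrArg c (mul_smul (op s) (op r) n)
  smul_zero r := rfl
  smul_add r c c' := rfl
  add_smul r s c := DFunLike.ext _ _ fun n => by
    show c ((op r + op s) • n) = c (op r • n) + c (op s • n)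
    rw [add_smul, map_add]
  zero_smul c := DFunLike.ext _ _ fun n => by
    show c ((0 : Rᵐᵒᵖ) • n) = 0
    rw [zero_smul, map_zero]

end Char

section Classes

variable (R : Type u) [Ring R] (M : Type u) [AddCommGroup M] [Module R M]

/-- `T` is `M`-`𝒜`-injective if, for every `A ∈ 𝒜`, every homomorphism `A → T` extends to `M`,
i.e. the restriction map `Hom(M, T) → Hom(A, T)` is surjective. -/
def MAInjective (𝒜 : Set (Submodule R M)) (T : Type u) [AddCommGroup T] [Module R T] : Prop :=
  ∀ A ∈ 𝒜, ∀ f : (↥A) →ₗ[R] T, ∃ g : M →ₗ[R] T, g ∘ₗ A.subtype = f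

/-- `T` is strongly `M`-`𝒜`-injective if `Ext¹_R(M/A, T) = 0` for all `A ∈ 𝒜`. -/
def SMAInjective (𝒜 : Set (Submodule R M)) (T : Type u) [AddCommGroup T] [Module R T] : Prop :=
  ∀ A ∈ 𝒜, Ext1IsZero R (M ⧸ A) T

/-- A right `R`-module `N` is `M`-`𝒜`-flat if `N ⊗ A → N ⊗ M` is injective for all `A ∈ 𝒜`. -/
def MAFlat (𝒜 : Set (Submodule R M)) (N : Type u) [AddCommGroup N] [Module Rᵐᵒᵖ N] : Prop :=
  ∀ A ∈ 𝒜, Function.Injective (ncMap R N A.subtype)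

/-- A right `R`-module `N` is strongly `M`-`𝒜`-flat if `Tor₁^R(N, M/A) = 0` for all `A ∈ 𝒜`. -/
def SMAFlat (𝒜 : Set (Submodule R M)) (N : Type u) [AddCommGroup N] [Module Rᵐᵒᵖ N] : Prop :=
  ∀ A ∈ 𝒜, Tor1IsZero R N (M ⧸ A)

end Classes

section Flat

variable (R : Type u) [Ring R]

/-- A left `R`-module `Z` is flat if tensoring with it preserves injectivity of morphisms of
right `R`-modules. -/
def FlatLeftModule (Z : Type u) [AddCommGroup Z] [Module R Z] : Prop :=
  ∀ (N N' : Type u) [AddCommGroup N] [Module Rᵐᵒᵖ N] [AddCommGroup N'] [Module Rᵐᵒᵖ N']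
    (g : N' →ₗ[Rᵐᵒᵖ] N), Function.Injective g → Function.Injective (ncMapL R g Z)

end Flat



section Aux

variable {R : Type u} [Ring R]

lemma ncMapL_mk {N N' : Type u} [AddCommGroup N] [Module Rᵐᵒᵖ N]
    [AddCommGroup N'] [Module Rᵐᵒᵖ N'] (g : N →ₗ[Rᵐᵒᵖ] N')
    (X : Type u) [AddCommGroup X] [Module R X] (w : N ⊗[ℤ] X) :
    ncMapL R g X (Submodule.Quotient.mk w) =
      Submodule.Quotient.mk (LinearMap.rTensor X g.toAddMonoidHom.toIntLinearMap w) := by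
  unfold ncMapL
  exact Submodule.mapQ_apply (p := ncRel R N X) (q := ncRel R N' X)
    (LinearMap.rTensor X g.toAddMonoidHom.toIntLinearMap) w

lemma toIntOp_comp {N₁ N₂ N₃ : Type u} [AddCommGroup N₁] [Module Rᵐᵒᵖ N₁]
    [AddCommGroup N₂] [Module Rᵐᵒᵖ N₂] [AddCommGroup N₃] [Module Rᵐᵒᵖ N₃]
    (g₁ : N₁ →ₗ[Rᵐᵒᵖ] N₂) (g₂ : N₂ →ₗ[Rᵐᵒᵖ] N₃) :
    ((g₂ ∘ₗ g₁).toAddMonoidHom).toIntLinearMap =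
      g₂.toAddMonoidHom.toIntLinearMap ∘ₗ g₁.toAddMonoidHom.toIntLinearMap := rfl

lemma ncMapL_comp {N₁ N₂ N₃ : Type u} [AddCommGroup N₁] [Module Rᵐᵒᵖ N₁]
    [AddCommGroup N₂] [Module Rᵐᵒᵖ N₂] [AddCommGroup N₃] [Module Rᵐᵒᵖ N₃]
    (g₁ : N₁ →ₗ[Rᵐᵒᵖ] N₂) (g₂ : N₂ →ₗ[Rᵐᵒᵖ] N₃)
    (X : Type u) [AddCommGroup X] [Module R X] (t : NCTensor R N₁ X) :
    ncMapL R (g₂ ∘ₗ g₁) X t = ncMapL R g₂ X (ncMapL R g₁ X t) := by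
  obtain ⟨w, rfl⟩ := Submodule.Quotient.mk_surjective _ t
  rw [ncMapL_mk, ncMapL_mk, ncMapL_mk, toIntOp_comp, LinearMap.rTensor_comp,
    LinearMap.comp_apply]

lemma ncMapL_zero {N N' : Type u} [AddCommGroup N] [Module Rᵐᵒᵖ N]
    [AddCommGroup N'] [Module Rᵐᵒᵖ N']
    (X : Type u) [AddCommGroup X] [Module R X] (t : NCTensor R N X) :
    ncMapL R (0 : N →ₗ[Rᵐᵒᵖ] N') X t = 0 := by
  obtain ⟨w, rfl⟩ := Submodule.Quotient.mk_surjective _ t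
  rw [ncMapL_mk]
  have h0 : ((0 : N →ₗ[Rᵐᵒᵖ] N').toAddMonoidHom).toIntLinearMap = 0 := rfl
  rw [h0, LinearMap.rTensor_zero, LinearMap.zero_apply, Submodule.Quotient.mk_eq_zero]
  exact zero_mem _

/-- The square relating `ncMap` and `ncMapL` commutes. -/
lemma ncSquare {N N' : Type u} [AddCommGroup N] [Module Rᵐᵒᵖ N]
    [AddCommGroup N'] [Module Rᵐᵒᵖ N'] (g : N' →ₗ[Rᵐᵒᵖ] N)
    {X Y : Type u} [AddCommGroup X] [Module R X] [AddCommGroup Y] [Module R Y]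
    (f : X →ₗ[R] Y) (t : NCTensor R N' X) :
    ncMap R N f (ncMapL R g X t) = ncMapL R g Y (ncMap R N' f t) := by
  obtain ⟨w, rfl⟩ := Submodule.Quotient.mk_surjective _ t
  rw [ncMapL_mk, ncMap_mk, ncMap_mk, ncMapL_mk, ← LinearMap.comp_apply,
    ← LinearMap.comp_apply, LinearMap.lTensor_comp_rTensor, LinearMap.rTensor_comp_lTensor]

lemma ncMapL_surjective {N N' : Type u} [AddCommGroup N] [Module Rᵐᵒᵖ N]
    [AddCommGroup N'] [Module Rᵐᵒᵖ N'] (g : N →ₗ[Rᵐᵒᵖ] N')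
    (hg : Function.Surjective g)
    (X : Type u) [AddCommGroup X] [Module R X] :
    Function.Surjective (ncMapL R g X) := by
  intro t
  obtain ⟨w, rfl⟩ := Submodule.Quotient.mk_surjective _ t
  have hg' : Function.Surjective g.toAddMonoidHom.toIntLinearMap := hg
  obtain ⟨w', hw'⟩ := LinearMap.rTensor_surjective X hg' w
  exact ⟨Submodule.Quotient.mk w', by rw [ncMapL_mk, hw']⟩

lemma ncMapL_exact {W F N : Type u} [AddCommGroup W] [Module Rᵐᵒᵖ W]
    [AddCommGroup F] [Module Rᵐᵒᵖ F] [AddCommGroup N] [Module Rᵐᵒᵖ N]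
    (j : W →ₗ[Rᵐᵒᵖ] F) (p : F →ₗ[Rᵐᵒᵖ] N)
    (hex : ∀ x, p x = 0 ↔ x ∈ Set.range j) (hp : Function.Surjective p)
    (X : Type u) [AddCommGroup X] [Module R X]
    (y : NCTensor R F X) (hy : ncMapL R p X y = 0) :
    ∃ z, ncMapL R j X z = y := by
  obtain ⟨w, rfl⟩ := Submodule.Quotient.mk_surjective _ y
  rw [ncMapL_mk, Submodule.Quotient.mk_eq_zero] at hy
  have hmap : ncRel R N X ≤
      Submodule.map (LinearMap.rTensor X p.toAddMonoidHom.toIntLinearMap) (ncRel R F X) := by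
    apply Submodule.span_le.mpr
    rintro _ ⟨r, n, x, rfl⟩
    obtain ⟨f, rfl⟩ := hp n
    refine ⟨(op r • f) ⊗ₜ[ℤ] x - f ⊗ₜ[ℤ] (r • x), Submodule.subset_span ⟨r, f, x, rfl⟩, ?_⟩
    simp only [map_sub, LinearMap.rTensor_tmul]
    have : p.toAddMonoidHom.toIntLinearMap (op r • f) = op r • p f := p.map_smul (op r) f
    rw [this]
    rfl
  obtain ⟨w₀, hw₀rel, hw₀⟩ := hmap hy
  have hex' : Function.Exact j.toAddMonoidHom.toIntLinearMap
      p.toAddMonoidHom.toIntLinearMap := fun x => hex x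
  have hp' : Function.Surjective p.toAddMonoidHom.toIntLinearMap := hp
  have hker : LinearMap.rTensor X p.toAddMonoidHom.toIntLinearMap (w - w₀) = 0 := by
    rw [map_sub, hw₀, sub_self]
  obtain ⟨u, hu⟩ := (rTensor_exact X hex' hp' (w - w₀)).mp hker
  refine ⟨Submodule.Quotient.mk u, ?_⟩
  rw [ncMapL_mk, hu]
  refine (Submodule.Quotient.eq _).mpr ?_
  have hw₀rel' : w₀ ∈ ncRel R F X := hw₀rel
  simpa using hw₀rel'

section Free

variable (ι : Type u)

/-- The bilinear map underlying the identification of `(ι →₀ Rᵐᵒᵖ) ⊗[R] X` with `ι →₀ X`. -/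
noncomputable def fwdBil (X : Type u) [AddCommGroup X] [Module R X] :
    (ι →₀ Rᵐᵒᵖ) →ₗ[ℤ] X →ₗ[ℤ] (ι →₀ X) :=
  LinearMap.mk₂ ℤ (fun g x => g.mapRange (fun r => r.unop • x) (by simp))
    (fun g g' x => by ext i; simp [add_smul])
    (fun z g x => by
      ext i
      simp only [Finsupp.smul_apply, Finsupp.mapRange_apply, MulOpposite.unop_smul,
        zsmul_eq_mul, MulOpposite.unop_mul, MulOpposite.unop_intCast]
      rw [mul_smul, Int.cast_smul_eq_zsmul, smul_comm])
    (fun g x x' => by ext i; simp [smul_add])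
    (fun z g x => by ext i; simp [smul_comm z])

@[simp] lemma fwdBil_apply (X : Type u) [AddCommGroup X] [Module R X]
    (g : ι →₀ Rᵐᵒᵖ) (x : X) (i : ι) :
    fwdBil (R := R) ι X g x i = (g i).unop • x := by
  simp [fwdBil]

/-- The forward map `NCTensor R (ι →₀ Rᵐᵒᵖ) X →ₗ[ℤ] (ι →₀ X)`. -/
noncomputable def fwd (X : Type u) [AddCommGroup X] [Module R X] :
    NCTensor R (ι →₀ Rᵐᵒᵖ) X →ₗ[ℤ] (ι →₀ X) :=
  Submodule.liftQ _ (TensorProduct.lift (fwdBil (R := R) ι X)) (by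
    rw [ncRel, Submodule.span_le]
    rintro _ ⟨r, n, x, rfl⟩
    refine LinearMap.mem_ker.mpr ((map_sub (TensorProduct.lift (fwdBil (R := R) ι X)) _ _).trans ?_)
    simp only [TensorProduct.lift.tmul]
    rw [sub_eq_zero]
    ext i
    simp [mul_smul])

lemma fwd_mk (X : Type u) [AddCommGroup X] [Module R X] (w : (ι →₀ Rᵐᵒᵖ) ⊗[ℤ] X) :
    fwd (R := R) ι X (Submodule.Quotient.mk w) = TensorProduct.lift (fwdBil (R := R) ι X) w :=
  rfl

/-- The backward map `(ι →₀ X) →ₗ[ℤ] NCTensor R (ι →₀ Rᵐᵒᵖ) X`. -/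
noncomputable def bwd (X : Type u) [AddCommGroup X] [Module R X] :
    (ι →₀ X) →ₗ[ℤ] NCTensor R (ι →₀ Rᵐᵒᵖ) X :=
  Finsupp.lsum ℤ fun i =>
    (ncRel R (ι →₀ Rᵐᵒᵖ) X).mkQ ∘ₗ
      ((TensorProduct.mk ℤ (ι →₀ Rᵐᵒᵖ) X) (Finsupp.single i 1))

lemma bwd_fwd (X : Type u) [AddCommGroup X] [Module R X] (t : NCTensor R (ι →₀ Rᵐᵒᵖ) X) :
    bwd (R := R) ι X (fwd (R := R) ι X t) = t := by
  obtain ⟨w, rfl⟩ := Submodule.Quotient.mk_surjective _ t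
  induction w with
  | zero => simp
  | add a b ha hb =>
    rw [Submodule.Quotient.mk_add, map_add, map_add, ha, hb]
  | tmul g x =>
    rw [fwd_mk, TensorProduct.lift.tmul]
    induction g using Finsupp.induction_linear with
    | zero => simp
    | add g g' hg hg' =>
      rw [map_add (fwdBil (R := R) ι X), LinearMap.add_apply, map_add, hg, hg',
        TensorProduct.add_tmul, Submodule.Quotient.mk_add]
    | single i c =>
      have h1 : fwdBil (R := R) ι X (Finsupp.single i c) x
          = Finsupp.single i (c.unop • x) := by
        simp [fwdBil, Finsupp.mapRange_single]
      rw [h1]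
      unfold bwd
      rw [Finsupp.lsum_single]
      show (Submodule.Quotient.mk ((Finsupp.single i (1 : Rᵐᵒᵖ)) ⊗ₜ[ℤ] (c.unop • x)) :
        NCTensor R (ι →₀ Rᵐᵒᵖ) X) = _
      refine (Submodule.Quotient.eq _).mpr ?_
      have hgen : (Finsupp.single i c) ⊗ₜ[ℤ] x
          - (Finsupp.single i 1) ⊗ₜ[ℤ] (c.unop • x) ∈ ncRel R (ι →₀ Rᵐᵒᵖ) X := by
        refine Submodule.subset_span ⟨c.unop, Finsupp.single i 1, x, ?_⟩
        rw [MulOpposite.op_unop, Finsupp.smul_single, smul_eq_mul, mul_one]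
      simpa [neg_sub] using neg_mem hgen

lemma fwd_natural {X Y : Type u} [AddCommGroup X] [Module R X] [AddCommGroup Y] [Module R Y]
    (f : X →ₗ[R] Y) (t : NCTensor R (ι →₀ Rᵐᵒᵖ) X) :
    fwd (R := R) ι Y (ncMap R (ι →₀ Rᵐᵒᵖ) f t)
      = (fwd (R := R) ι X t).mapRange f (map_zero f) := by
  obtain ⟨w, rfl⟩ := Submodule.Quotient.mk_surjective _ t
  induction w with
  | zero => rw [ncMap_mk]; simp
  | add a b ha hb =>
    rw [Submodule.Quotient.mk_add, map_add, map_add, ha, hb, map_add,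
      Finsupp.mapRange_add (map_add f)]
  | tmul g x =>
    rw [ncMap_mk, LinearMap.lTensor_tmul, fwd_mk, fwd_mk, TensorProduct.lift.tmul,
      TensorProduct.lift.tmul]
    ext i
    simp [Finsupp.mapRange_apply, map_smul]

lemma free_MAFlat {X Y : Type u} [AddCommGroup X] [Module R X] [AddCommGroup Y] [Module R Y]
    (f : X →ₗ[R] Y) (hf : Function.Injective f) :
    Function.Injective (ncMap R (ι →₀ Rᵐᵒᵖ) f) := by
  intro t t' h
  have h2 := congrArg (fwd (R := R) ι Y) h
  rw [fwd_natural, fwd_natural] at h2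
  have h3 : fwd (R := R) ι X t = fwd (R := R) ι X t' := by
    ext i
    have := congrArg (fun z => z i) h2
    simp only [Finsupp.mapRange_apply] at this
    exact hf this
  rw [← bwd_fwd (R := R) ι X t, ← bwd_fwd (R := R) ι X t', h3]

end Free

end Aux


section Backward

variable {R : Type u} [Ring R]

set_option maxHeartbeats 1000000 in
/-- The main diagram chase for the backward direction, with an abstract `M`-`𝒜`-flat
cover `FT` of `N`. -/
lemma backward_aux {M : Type u} [AddCommGroup M] [Module R M]
    {𝒜 : Set (Submodule R M)} (hM : FlatLeftModule R M)
    (hyp : ∀ (T : Type u) [AddCommGroup T] [Module Rᵐᵒᵖ T], MAFlat R M 𝒜 T →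
        ∀ K : Submodule Rᵐᵒᵖ T, MAFlat R M 𝒜 (↥K))
    (A : Submodule R M) (hAmem : A ∈ 𝒜)
    (N N' : Type u) [AddCommGroup N] [Module Rᵐᵒᵖ N] [AddCommGroup N'] [Module Rᵐᵒᵖ N']
    (g : N' →ₗ[Rᵐᵒᵖ] N) (hg : Function.Injective g)
    (FT : Type u) [AddCommGroup FT] [Module Rᵐᵒᵖ FT] (hFT : MAFlat R M 𝒜 FT)
    (π : FT →ₗ[Rᵐᵒᵖ] N) (hπ : Function.Surjective π) :
    Function.Injective (ncMapL R g (↥A)) := by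
  let F' : Submodule Rᵐᵒᵖ FT := Submodule.comap π (LinearMap.range g)
  let S' : Submodule Rᵐᵒᵖ ↥F' := Submodule.comap F'.subtype (LinearMap.ker π)
  let e := LinearEquiv.ofInjective g hg
  let π' : ↥F' →ₗ[Rᵐᵒᵖ] N' :=
    (e.symm : ↥(LinearMap.range g) →ₗ[Rᵐᵒᵖ] N') ∘ₗ
      (LinearMap.codRestrict (LinearMap.range g) (π ∘ₗ F'.subtype) fun x => x.2)
  have hgπ' : ∀ x : ↥F', g (π' x) = π (x : FT) := by
    intro x
    have h1 : (↑(e (e.symm ⟨π (x : FT), x.2⟩)) : N)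
        = g (e.symm ⟨π (x : FT), x.2⟩) :=
      LinearEquiv.ofInjective_apply (h := hg) g _
    rw [e.apply_symm_apply] at h1
    exact h1.symm
  have hπ' : Function.Surjective π' := by
    intro n'
    obtain ⟨f, hf⟩ := hπ (g n')
    have hfF' : f ∈ F' := by
      rw [Submodule.mem_comap, hf]; exact LinearMap.mem_range_self g n'
    refine ⟨⟨f, hfF'⟩, hg ?_⟩
    rw [hgπ' ⟨f, hfF'⟩]; exact hf
  have hexact : ∀ x : FT, π x = 0 ↔
      x ∈ Set.range (F'.subtype ∘ₗ S'.subtype) := by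
    intro x
    constructor
    · intro hx
      have hxF' : x ∈ F' := by
        rw [Submodule.mem_comap, hx]; exact zero_mem _
      have hxS' : (⟨x, hxF'⟩ : ↥F') ∈ S' := by
        rw [Submodule.mem_comap, LinearMap.mem_ker]; exact hx
      exact ⟨⟨⟨x, hxF'⟩, hxS'⟩, rfl⟩
    · rintro ⟨s, rfl⟩
      have hs := s.2
      rw [Submodule.mem_comap, LinearMap.mem_ker] at hs
      exact hs
  have hcompπ : π ∘ₗ F'.subtype = g ∘ₗ π' := LinearMap.ext fun x => (hgπ' x).symm
  have hcomp0 : π' ∘ₗ S'.subtype = 0 := by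
    apply LinearMap.ext; intro s
    apply hg
    rw [LinearMap.comp_apply, hgπ' (S'.subtype s), LinearMap.zero_apply, map_zero]
    have hs := s.2
    rw [Submodule.mem_comap, LinearMap.mem_ker] at hs
    exact hs
  clear_value π' e S' F'
  have hF'flat : MAFlat R M 𝒜 ↥F' := hyp FT hFT F'
  have h1 : Function.Injective (ncMap R ↥F' A.subtype) := hF'flat A hAmem
  have h2 : Function.Injective (ncMapL R F'.subtype M) :=
    hM FT (↥F') F'.subtype (Submodule.injective_subtype F')
  have hF'inj : Function.Injective (ncMapL R F'.subtype (↥A)) := by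
    intro u v huv
    apply h1
    apply h2
    rw [← ncSquare F'.subtype A.subtype u, ← ncSquare F'.subtype A.subtype v, huv]
  have key : ∀ t : NCTensor R N' ↥A, ncMapL R g ↥A t = 0 → t = 0 := by
    intro t ht
    obtain ⟨y, hy⟩ := ncMapL_surjective π' hπ' (↥A) t
    have hy0 : ncMapL R π ↥A (ncMapL R F'.subtype ↥A y) = 0 := by
      rw [← ncMapL_comp, hcompπ, ncMapL_comp, hy, ht]
    obtain ⟨z, hz⟩ := ncMapL_exact (W := ↥S') (F := FT) (N := N) (F'.subtype ∘ₗ S'.subtype) π hexact hπ (↥A) _ hy0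
    rw [ncMapL_comp] at hz
    have hz3 := hF'inj hz
    rw [← hy, ← hz3, ← ncMapL_comp, hcomp0, ncMapL_zero]
  intro t t' h
  have h0 : ncMapL R g ↥A (t - t') = 0 := by rw [map_sub, h, sub_self]
  exact sub_eq_zero.mp (key _ h0)

end Backward

/-- Let `M` be a flat left `R`-module. Then every `A ∈ 𝒜` is a flat left `R`-module if and
only if every submodule of every `M`-`𝒜`-flat right `R`-module is `M`-`𝒜`-flat. -/
theorem stmt16 (R : Type u) [Ring R] (M : Type u) [AddCommGroup M] [Module R M]
    (𝒜 : Set (Submodule R M)) (hM : FlatLeftModule R M) :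
    (∀ A ∈ 𝒜, FlatLeftModule R (↥A)) ↔
      (∀ (T : Type u) [AddCommGroup T] [Module Rᵐᵒᵖ T], MAFlat R M 𝒜 T →
        ∀ K : Submodule Rᵐᵒᵖ T, MAFlat R M 𝒜 (↥K)) := by
  constructor
  · -- forward direction
    intro hA T _ _ hT K A hAmem
    intro t t' h
    have h1 : Function.Injective (ncMapL R K.subtype (↥A)) :=
      hA A hAmem T (↥K) K.subtype (Submodule.injective_subtype K)
    have h2 : Function.Injective (ncMap R T A.subtype) := hT A hAmem
    apply h1
    apply h2
    rw [ncSquare K.subtype A.subtype t, ncSquare K.subtype A.subtype t', h]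
  · -- backward direction
    intro hyp A hAmem
    intro N N' _ _ _ _ g hg
    have hFflat : MAFlat R M 𝒜 (N →₀ Rᵐᵒᵖ) := fun B hB =>
      free_MAFlat N B.subtype (Submodule.injective_subtype B)
    have hπ : Function.Surjective (Finsupp.linearCombination Rᵐᵒᵖ (id : N → N)) := fun n =>
      ⟨Finsupp.single n 1, by simp [Finsupp.linearCombination_single]⟩
    exact backward_aux hM hyp A hAmem N N' g hg (N →₀ Rᵐᵒᵖ) hFflat
      (Finsupp.linearCombination Rᵐᵒᵖ (id : N → N)) hπ
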